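/- Mellin boundedness lemma (Lemma 3.4): let f : (0,∞) → ℂ be continuous, let ε > 0, C₀ ≥ 0 and s > 1, and suppose: (i) for every ξ ∈ ℂ with −ε < Im ξ the integral (ℳf)(ξ) = ∫₀^∞ f(r) r^{−iξ−1} dr converges absolutely; (ii) the function ξ ↦ (ℳf)(ξ) is holomorphic on {ξ ∈ ℂ : Im ξ > −ε}; and (iii) |(ℳf)(ξ)| ≤ C₀ ⟨ξ⟩^{−s} for all ξ with Im ξ > −ε. Then f is bounded on (0,1) and sup_{r∈(0,1)} |f(r)| ≤ (1/2π) ∫_{−∞}^{∞} |(ℳf)(ξ)| dξ < ∞. -/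

import Mathlib

open MeasureTheory Set

/-- The Mellin transform `(ℳf)(ξ) = ∫₀^∞ f(r) r^{-iξ-1} dr` in the convention of the paper. -/
noncomputable def MellinT (f : ℝ → ℂ) (ξ : ℂ) : ℂ :=
  ∫ r in Ioi (0 : ℝ), f r * (r : ℂ) ^ (-(Complex.I * ξ) - 1)

lemma MellinT_eq_mellin (f : ℝ → ℂ) (ξ : ℂ) :
    MellinT f ξ = mellin f (-(Complex.I * ξ)) := by
  unfold MellinT mellin
  refine setIntegral_congr_fun measurableSet_Ioi fun t _ => ?_
  rw [smul_eq_mul, mul_comm]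

/-- **Mellin boundedness lemma** (Lemma 3.4).  If `f : (0,∞) → ℂ` is continuous, its
Mellin transform converges absolutely and is holomorphic on `{Im ξ > -ε}` and satisfies
`|(ℳf)(ξ)| ≤ C₀⟨ξ⟩^{-s}` there with `s > 1`, then `f` is bounded on `(0,1)` with
`sup_{(0,1)} |f| ≤ (2π)^{-1} ∫_{-∞}^∞ |(ℳf)(ξ)| dξ < ∞`. -/
theorem mellin_bound (f : ℝ → ℂ) (hf : ContinuousOn f (Ioi 0))
    (ε : ℝ) (hε : 0 < ε) (C₀ : ℝ) (hC₀ : 0 ≤ C₀) (s : ℝ) (hs : 1 < s)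
    (hconv : ∀ ξ : ℂ, -ε < ξ.im →
      IntegrableOn (fun r : ℝ => f r * (r : ℂ) ^ (-(Complex.I * ξ) - 1)) (Ioi 0))
    (hhol : DifferentiableOn ℂ (MellinT f) {ξ : ℂ | -ε < ξ.im})
    (hbound : ∀ ξ : ℂ, -ε < ξ.im →
      ‖MellinT f ξ‖ ≤ C₀ * (1 + ‖ξ‖ ^ 2) ^ (-s / 2)) :
    Integrable (fun x : ℝ => ‖MellinT f (x : ℂ)‖) ∧
    ∀ r ∈ Ioo (0 : ℝ) 1,
      ‖f r‖ ≤ (1 / (2 * Real.pi)) * ∫ x : ℝ, ‖MellinT f (x : ℂ)‖ := by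
  have hmem : ∀ x : ℝ, ((x : ℂ) ∈ {ξ : ℂ | -ε < ξ.im}) := by
    intro x; simp [neg_lt, hε]
  -- continuity of the restriction to the real axis
  have hcont : Continuous fun x : ℝ => MellinT f (x : ℂ) :=
    (hhol.continuousOn).comp_continuous Complex.continuous_ofReal hmem
  -- integrability of the restriction to the real axis
  have hIntC : Integrable fun x : ℝ => MellinT f (x : ℂ) := by
    have hmaj : Integrable fun x : ℝ => C₀ * ((1 : ℝ) + ‖x‖ ^ 2) ^ (-s / 2) := by
      refine (integrable_rpow_neg_one_add_norm_sq (E := ℝ) ?_).const_mul C₀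
      simpa using hs
    refine hmaj.mono' hcont.aestronglyMeasurable (Filter.Eventually.of_forall fun x => ?_)
    have := hbound (x : ℂ) (hmem x)
    simpa [Complex.norm_real] using this
  have hInt : Integrable fun x : ℝ => ‖MellinT f (x : ℂ)‖ := hIntC.norm
  refine ⟨hInt, fun r hr => ?_⟩
  have hr0 : 0 < r := hr.1
  -- Mellin inversion at σ = 0
  have hfc : MellinConvergent f 0 := by
    have h0 := hconv 0 (by simpa using hε)
    refine (h0.congr_fun (fun t ht => ?_) measurableSet_Ioi)
    rw [smul_eq_mul, mul_comm]
    norm_num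
    ring
  have hFf : Complex.VerticalIntegrable (mellin f) 0 := by
    have : Integrable fun y : ℝ => MellinT f ((-y : ℝ) : ℂ) := hIntC.comp_neg
    refine this.congr (Filter.Eventually.of_forall fun y => ?_)
    show MellinT f ((-y : ℝ) : ℂ) = mellin f ((0 : ℝ) + y * Complex.I)
    rw [MellinT_eq_mellin]
    push_cast
    ring_nf
  have hfx : ContinuousAt f r := hf.continuousAt (Ioi_mem_nhds hr0)
  have hinv := mellinInv_mellin_eq 0 f hr0 hfc hFf hfx
  rw [← hinv]
  unfold mellinInv
  rw [norm_smul]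
  have hpi : (0:ℝ) < 1 / (2 * Real.pi) := by positivity
  rw [show ‖(1 / (2 * Real.pi) : ℝ)‖ = 1 / (2 * Real.pi) from abs_of_pos hpi]
  gcongr
  calc ‖∫ y : ℝ, (r : ℂ) ^ (-(0 + y * Complex.I)) • mellin f (0 + y * Complex.I)‖
      ≤ ∫ y : ℝ, ‖(r : ℂ) ^ (-(0 + y * Complex.I)) • mellin f (0 + y * Complex.I)‖ :=
        norm_integral_le_integral_norm _
    _ = ∫ y : ℝ, ‖MellinT f ((-y : ℝ) : ℂ)‖ := by
        refine integral_congr_ae (Filter.Eventually.of_forall fun y => ?_)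
        show ‖(r : ℂ) ^ (-((0:ℝ) + y * Complex.I)) • mellin f ((0:ℝ) + y * Complex.I)‖
          = ‖MellinT f ((-y : ℝ) : ℂ)‖
        simp only [Complex.ofReal_zero]
        rw [norm_smul]
        have h1 : ‖(r : ℂ) ^ (-(0 + y * Complex.I))‖ = 1 := by
          rw [Complex.norm_cpow_eq_rpow_re_of_pos hr0]
          simp
        rw [h1, one_mul, MellinT_eq_mellin]
        push_cast
        ring_nf
    _ = ∫ x : ℝ, ‖MellinT f (x : ℂ)‖ := by
        simpa using MeasureTheory.integral_neg_eq_self (fun x : ℝ => ‖MellinT f (x : ℂ)‖) volume
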